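/- Let s₁, s₂ ∈ ℝ with s₁ ≤ 0 < s₂. Then there exist x₁ ∈ (0,1) and x₂ ∈ (−1,0) such that x₁(s₁(x₁−x₂) − 2 + x₁x₂) − 3x₂ = 0 and x₂(s₂(x₂−x₁) − 2 + x₁x₂) − 3x₁ = 0. -/

import Mathlib

/-- for `s₁ ≤ 0 < s₂` there is a solution `(x₁, x₂) ∈ (0,1) × (-1,0)`
of the scalar-flat (`s = 0`) equations. -/
theorem stmt17 (s₁ s₂ : ℝ) (h₁ : s₁ ≤ 0) (h₂ : 0 < s₂) :
    ∃ x₁ ∈ Set.Ioo (0:ℝ) 1, ∃ x₂ ∈ Set.Ioo (-1:ℝ) 0,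
      x₁ * (s₁ * (x₁ - x₂) - 2 + x₁ * x₂) - 3 * x₂ = 0 ∧
      x₂ * (s₂ * (x₂ - x₁) - 2 + x₁ * x₂) - 3 * x₁ = 0 := by
  have hA : (0:ℝ) < 1 - s₁ := by linarith
  set r : ℝ := Real.sqrt ((2 - s₁)^2 + 12*(1 - s₁)) with hr_def
  have hr2 : r^2 = (2 - s₁)^2 + 12*(1 - s₁) := Real.sq_sqrt (by nlinarith)
  have hr0 : 0 ≤ r := Real.sqrt_nonneg _
  set b : ℝ := (r - (2 - s₁)) / (2*(1 - s₁)) with hb_def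
  have hrB : 2 - s₁ < r := by nlinarith
  have hb0 : 0 < b := div_pos (by linarith) (by linarith)
  have hhb : (1 - s₁)*b^2 + (2 - s₁)*b = 3 := by
    rw [hb_def]
    field_simp
    nlinarith [hr2]
  have hb1 : b ≤ 1 := by nlinarith [hhb, hb0]
  clear_value r b
  clear hr_def hb_def hr2 hr0 hrB
  -- the denominator D x = x^2 - s₁*x - 3 is negative on [0, b]
  have hD : ∀ x ∈ Set.Icc (0:ℝ) b, x^2 - s₁*x - 3 < 0 := by
    intro x hx
    obtain ⟨hx0, hxb⟩ := hx
    nlinarith [hhb, mul_nonneg hx0 hx0, mul_nonneg (mul_nonneg hx0 hx0) (neg_nonneg.mpr h₁)]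
  set q : ℝ → ℝ := fun x => (2 - s₁*x) / (x^2 - s₁*x - 3) with hq_def
  have hqc : ContinuousOn q (Set.Icc 0 b) := by
    apply ContinuousOn.div
    · fun_prop
    · fun_prop
    · exact fun x hx => ne_of_lt (hD x hx)
  set F : ℝ → ℝ := fun x => x * (q x * (s₂*(x*q x - x) - 2 + x*(x*q x)) - 3) with hF_def
  have hFc : ContinuousOn F (Set.Icc 0 b) := by
    apply ContinuousOn.mul continuousOn_id
    apply ContinuousOn.sub _ continuousOn_const
    apply hqc.mul
    apply ContinuousOn.add
    · apply ContinuousOn.sub _ continuousOn_const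
      apply ContinuousOn.mul continuousOn_const
      exact ContinuousOn.sub (continuousOn_id.mul hqc) continuousOn_id
    · exact continuousOn_id.mul (continuousOn_id.mul hqc)
  set P : ℝ → ℝ := fun x => q x * (s₂*(x*q x - x) - 2 + x*(x*q x)) - 3 with hP_def
  have hPc : ContinuousOn P (Set.Icc 0 b) := by
    apply ContinuousOn.sub _ continuousOn_const
    apply hqc.mul
    apply ContinuousOn.add
    · apply ContinuousOn.sub _ continuousOn_const
      apply ContinuousOn.mul continuousOn_const
      exact ContinuousOn.sub (continuousOn_id.mul hqc) continuousOn_id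
    · exact continuousOn_id.mul (continuousOn_id.mul hqc)
  have hP0 : P 0 = -5/3 := by
    simp only [hP_def, hq_def]
    norm_num
  -- find a ∈ (0, b) with P a < 0
  have hne : (nhdsWithin (0:ℝ) (Set.Ioo 0 b)).NeBot := by
    rw [← mem_closure_iff_nhdsWithin_neBot, closure_Ioo hb0.ne]
    exact ⟨le_refl 0, hb0.le⟩
  have hcw : Filter.Tendsto P (nhdsWithin (0:ℝ) (Set.Ioo 0 b)) (nhds (P 0)) := by
    have h0 : ContinuousWithinAt P (Set.Icc 0 b) 0 :=
      hPc.continuousWithinAt ⟨le_refl 0, hb0.le⟩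
    exact h0.mono Set.Ioo_subset_Icc_self
  have hevP : ∀ᶠ x in nhdsWithin (0:ℝ) (Set.Ioo 0 b), P x < 0 := by
    apply hcw.eventually_lt_const
    rw [hP0]; norm_num
  obtain ⟨a, hPa, ha⟩ := (hevP.and (eventually_mem_nhdsWithin)).exists
  -- F a < 0
  have hFa : F a < 0 := mul_neg_of_pos_of_neg ha.1 hPa
  -- F b > 0
  have hDb : b^2 - s₁*b - 3 < 0 := hD b ⟨hb0.le, le_refl b⟩
  have hgb : b * q b = -1 := by
    rw [hq_def]
    beta_reduce
    rw [mul_div_assoc', div_eq_iff hDb.ne]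
    linear_combination hhb
  have hFb : 0 < F b := by
    have hFbeq : F b = (b*q b)*(s₂*(b*q b - b) - 2 + b*(b*q b)) - 3*b := by
      rw [hF_def]; ring
    rw [hFbeq, hgb]
    nlinarith [hb0, hb1, h₂]
  -- IVT
  have hab : a ≤ b := le_of_lt ha.2
  have hFc' : ContinuousOn F (Set.Icc a b) :=
    hFc.mono (Set.Icc_subset_Icc ha.1.le (le_refl b))
  have h0mem : (0:ℝ) ∈ Set.Ioo (F a) (F b) := ⟨hFa, hFb⟩
  obtain ⟨c, hc, hFc0⟩ := intermediate_value_Ioo hab hFc' h0mem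
  -- assemble
  have hc0 : 0 < c := lt_trans ha.1 hc.1
  have hcb : c < b := hc.2
  have hc1 : c < 1 := lt_of_lt_of_le hcb hb1
  have hDc : c^2 - s₁*c - 3 < 0 := hD c ⟨hc0.le, hcb.le⟩
  have hNc : 0 < c * (2 - s₁*c) := by nlinarith
  have hqc' : c * q c = (c * (2 - s₁*c)) / (c^2 - s₁*c - 3) := by
    rw [hq_def]; ring
  refine ⟨c, ⟨hc0, hc1⟩, c * q c, ⟨?_, ?_⟩, ?_, ?_⟩
  · -- c * q c > -1
    rw [hqc', lt_div_iff_of_neg hDc]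
    have haux : 0 < (1 - s₁)*(b + c) + (2 - s₁) := by nlinarith
    nlinarith [hhb, mul_pos (sub_pos.mpr hcb) haux]
  · -- c * q c < 0
    rw [hqc']
    exact div_neg_of_pos_of_neg hNc hDc
  · -- E1
    rw [hq_def]
    beta_reduce
    linear_combination c * div_mul_cancel₀ (2 - s₁*c) hDc.ne
  · -- E2 = F c = 0
    have : (c * q c) * (s₂*((c*q c) - c) - 2 + c*(c*q c)) - 3*c = F c := by
      rw [hF_def]; ring
    rw [this, hFc0]
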